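/- For non-negative integers n and p, the q-super Catalan polynomials satisfy the recurrence A_{n,n+p}(q) = Σ_{k=0}^{⌊p/2⌋} A_{n,k}(q) Σ_{j=k}^{p-k} q^{k(n+k)+j(n+j)} [p choose 2k]_q [p-2k choose j-k]_q. -/

import Mathlib

open Polynomial

/-- The `q`-factorial `[n]! = ∏_{i=1}^n (1 + q + ⋯ + q^{i-1})` in `ℚ(q)`. -/
noncomputable def qFac (n : ℕ) : RatFunc ℚ :=
  ∏ i ∈ Finset.range n, ∑ j ∈ Finset.range (i + 1), RatFunc.X ^ j

/-- The Gaussian binomial coefficient `[n choose m]_q`, zero when out of range. -/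
noncomputable def qBinom (n m : ℕ) : RatFunc ℚ :=
  if m ≤ n then qFac n / (qFac (n - m) * qFac m) else 0

/-- The `q`-super Catalan number `A_{n,m}(q)`. -/
noncomputable def qA (n m : ℕ) : RatFunc ℚ :=
  qFac (2 * n) * qFac (2 * m) / (qFac n * qFac (n + m) * qFac m)

noncomputable def qInt (n : ℕ) : RatFunc ℚ := ∑ j ∈ Finset.range n, RatFunc.X ^ j

lemma qInt_eq_algebraMap (n : ℕ) :
    qInt n = algebraMap (Polynomial ℚ) (RatFunc ℚ) (∑ j ∈ Finset.range n, X ^ j) := by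
  simp [qInt, map_sum, map_pow, RatFunc.algebraMap_X]

lemma qInt_ne_zero {n : ℕ} (h : 0 < n) : qInt n ≠ 0 := by
  rw [qInt_eq_algebraMap]
  apply RatFunc.algebraMap_ne_zero
  intro hz
  have := congrArg (Polynomial.eval (1 : ℚ)) hz
  simp [Polynomial.eval_finset_sum] at this
  omega

lemma qFac_succ (n : ℕ) : qFac (n + 1) = qFac n * qInt (n + 1) := by
  rw [qFac, Finset.prod_range_succ]; rfl

lemma qFac_zero : qFac 0 = 1 := by simp [qFac]

lemma qFac_ne_zero (n : ℕ) : qFac n ≠ 0 := by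
  induction n with
  | zero => simp [qFac_zero]
  | succ n ih => rw [qFac_succ]; exact mul_ne_zero ih (qInt_ne_zero (Nat.succ_pos n))

lemma qInt_add (a b : ℕ) : qInt (a + b) = qInt a + RatFunc.X ^ a * qInt b := by
  rw [qInt, qInt, qInt, Finset.sum_range_add, Finset.mul_sum]
  congr 1
  exact Finset.sum_congr rfl fun j _ => pow_add _ _ _

lemma qBinom_of_le {n m : ℕ} (h : m ≤ n) : qBinom n m = qFac n / (qFac (n - m) * qFac m) := if_pos h

lemma qBinom_of_lt {n m : ℕ} (h : n < m) : qBinom n m = 0 := if_neg (by omega)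

lemma qBinom_zero (n : ℕ) : qBinom n 0 = 1 := by
  rw [qBinom_of_le (Nat.zero_le n)]
  simp [qFac_zero, div_self (mul_ne_zero (qFac_ne_zero n) (one_ne_zero))]
  exact qFac_ne_zero n

lemma qBinom_ne_zero {n m : ℕ} (h : m ≤ n) : qBinom n m ≠ 0 := by
  rw [qBinom_of_le h]
  exact div_ne_zero (qFac_ne_zero _) (mul_ne_zero (qFac_ne_zero _) (qFac_ne_zero _))

lemma qBinom_symm {n m : ℕ} (h : m ≤ n) : qBinom n m = qBinom n (n - m) := by
  rw [qBinom_of_le h, qBinom_of_le (Nat.sub_le n m)]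
  have : n - (n - m) = m := by omega
  rw [this, mul_comm]

lemma qBinom_self (n : ℕ) : qBinom n n = 1 := by
  rw [qBinom_of_le le_rfl, Nat.sub_self, qFac_zero, one_mul]
  exact div_self (qFac_ne_zero n)

lemma qBinom_pascal (N r : ℕ) :
    qBinom (N + 1) (r + 1) = qBinom N (r + 1) + RatFunc.X ^ (N - r) * qBinom N r := by
  rcases Nat.lt_or_ge N r with h | h
  · rw [qBinom_of_lt (by omega), qBinom_of_lt (by omega), qBinom_of_lt (by omega)]
    ring
  rcases Nat.eq_or_lt_of_le h with rfl | h
  · rw [qBinom_self, qBinom_self, qBinom_of_lt (by omega), Nat.sub_self]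
    ring
  · -- r < N
    rw [qBinom_of_le (by omega), qBinom_of_le (by omega), qBinom_of_le (by omega)]
    have e1 : N + 1 - (r + 1) = N - r := by omega
    have e2 : N - (r + 1) = N - r - 1 := by omega
    rw [e1, e2]
    have hNr : N - r = (N - r - 1) + 1 := by omega
    have hsplit : qInt (N + 1) = qInt (N - r) + RatFunc.X ^ (N - r) * qInt (r + 1) := by
      have : N + 1 = (N - r) + (r + 1) := by omega
      rw [this, qInt_add]
    have hfN1 : qFac (N + 1) = qFac N * qInt (N + 1) := qFac_succ N
    have hfNr : qFac (N - r) = qFac (N - r - 1) * qInt (N - r) := by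
      rw [hNr, qFac_succ, ← hNr]
    have hfr : qFac (r + 1) = qFac r * qInt (r + 1) := qFac_succ r
    rw [hfN1, hsplit, hfNr, hfr]
    have h1 := qFac_ne_zero N
    have h2 := qFac_ne_zero (N - r - 1)
    have h3 := qFac_ne_zero r
    have h4 : qInt (N - r) ≠ 0 := by rw [hNr]; exact qInt_ne_zero (Nat.succ_pos _)
    have h5 : qInt (r + 1) ≠ 0 := qInt_ne_zero (Nat.succ_pos _)
    field_simp

lemma qVandermonde (b a r : ℕ) :
    qBinom (a + b) r =
      ∑ i ∈ Finset.range (r + 1),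
        RatFunc.X ^ ((r - i) * (a - i)) * qBinom a i * qBinom b (r - i) := by
  induction b generalizing r with
  | zero =>
    rw [Nat.add_zero]
    rw [Finset.sum_eq_single r (fun i hi hne => by
      have : 0 < r - i := by simp [Finset.mem_range] at hi; omega
      simp [qBinom_of_lt this])
      (fun h => absurd (Finset.self_mem_range_succ r) h)]
    simp [Nat.sub_self, qBinom_zero]
  | succ b ih =>
    cases r with
    | zero => simp [qBinom_zero]
    | succ r' =>
      have key : ∀ i ∈ Finset.range (r' + 1),
          RatFunc.X ^ ((r' + 1 - i) * (a - i)) * qBinom a i * qBinom (b + 1) (r' + 1 - i)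
            = RatFunc.X ^ ((r' + 1 - i) * (a - i)) * qBinom a i * qBinom b (r' + 1 - i)
              + RatFunc.X ^ (a + b - r') *
                  (RatFunc.X ^ ((r' - i) * (a - i)) * qBinom a i * qBinom b (r' - i)) := by
        intro i hi
        have hir : i ≤ r' := by simp [Finset.mem_range] at hi; omega
        have h1 : r' + 1 - i = (r' - i) + 1 := by omega
        rw [h1, qBinom_pascal b (r' - i), ← h1, mul_add]
        congr 1
        by_cases ha : i ≤ a
        · by_cases hb : r' - i ≤ b
          · have he : (r' + 1 - i) * (a - i) + (b - (r' - i))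
                = (a + b - r') + (r' - i) * (a - i) := by
              zify [ha, hb, hir, show i ≤ r' + 1 by omega, show r' ≤ a + b by omega]
              ring
            calc RatFunc.X ^ ((r' + 1 - i) * (a - i)) * qBinom a i *
                  (RatFunc.X ^ (b - (r' - i)) * qBinom b (r' - i))
                = RatFunc.X ^ ((r' + 1 - i) * (a - i)) * RatFunc.X ^ (b - (r' - i)) *
                    (qBinom a i * qBinom b (r' - i)) := by ring
              _ = RatFunc.X ^ ((r' + 1 - i) * (a - i) + (b - (r' - i))) *
                    (qBinom a i * qBinom b (r' - i)) := by rw [← pow_add]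
              _ = RatFunc.X ^ ((a + b - r') + (r' - i) * (a - i)) *
                    (qBinom a i * qBinom b (r' - i)) := by rw [he]
              _ = RatFunc.X ^ (a + b - r') *
                    (RatFunc.X ^ ((r' - i) * (a - i)) * qBinom a i * qBinom b (r' - i)) := by
                  rw [pow_add]; ring
          · simp [qBinom_of_lt (show b < r' - i by omega)]
        · simp [qBinom_of_lt (show a < i by omega)]
      have lhs1 : a + (b + 1) = (a + b) + 1 := by omega
      rw [lhs1, qBinom_pascal, ih, ih]
      conv_rhs => rw [Finset.sum_range_succ]
      rw [Finset.sum_congr rfl key, Finset.sum_add_distrib, ← Finset.mul_sum]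
      conv_lhs => rw [Finset.sum_range_succ]
      simp [Nat.sub_self, qBinom_zero]
      ring

lemma qVand_inst (n p : ℕ) :
    qBinom (2 * n + 2 * p) (n + p) =
      ∑ j ∈ Finset.range (p + 1),
        RatFunc.X ^ (j * (n + j)) * qBinom p j * qBinom (2 * n + p) (n + j) := by
  have h := qVandermonde p (2 * n + p) (n + p)
  rw [show 2 * n + p + p = 2 * n + 2 * p by ring] at h
  rw [show n + p + 1 = n + (p + 1) by ring, Finset.sum_range_add] at h
  have hz : ∑ i ∈ Finset.range n,
      RatFunc.X ^ ((n + p - i) * (2 * n + p - i)) * qBinom (2 * n + p) i *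
        qBinom p (n + p - i) = 0 := by
    apply Finset.sum_eq_zero
    intro i hi
    have : i < n := Finset.mem_range.mp hi
    rw [qBinom_of_lt (show p < n + p - i by omega)]
    ring
  rw [hz, zero_add] at h
  rw [h]
  conv_lhs => rw [← Finset.sum_range_reflect]
  apply Finset.sum_congr rfl
  intro i hi
  have hip : i ≤ p := by simp [Finset.mem_range] at hi; omega
  have e0 : p + 1 - 1 - i = p - i := by omega
  have e1 : n + (p - i) = n + p - i := by omega
  have e2 : n + p - (n + p - i) = i := by omega
  have e3 : 2 * n + p - (n + p - i) = n + i := by omega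
  rw [e0, e1, e2, e3]
  rw [qBinom_symm (show n + p - i ≤ 2 * n + p by omega), e3]
  ring

lemma qRatio (n j k : ℕ) :
    qBinom j (k + 1) / qBinom (n + k + 1) (k + 1) =
      (qInt j / qInt (n + 1)) * (qBinom (j - 1) k / qBinom (n + 1 + k) k) := by
  rcases j with _ | j'
  · rw [qBinom_of_lt (Nat.succ_pos k)]
    simp [qInt]
  · rcases Nat.lt_or_ge j' k with h | h
    · rw [qBinom_of_lt (by omega : (j' + 1 : ℕ) < k + 1)]
      rw [show (j' + 1 - 1 : ℕ) = j' from rfl, qBinom_of_lt h]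
      simp
    · -- k ≤ j'
      rw [show (j' + 1 - 1 : ℕ) = j' from rfl]
      rw [qBinom_of_le (by omega : k + 1 ≤ j' + 1), qBinom_of_le (by omega : k + 1 ≤ n + k + 1),
        qBinom_of_le h, qBinom_of_le (by omega : k ≤ n + 1 + k)]
      rw [show j' + 1 - (k + 1) = j' - k from by omega,
        show n + k + 1 - (k + 1) = n from by omega,
        show n + 1 + k - k = n + 1 from by omega]
      rw [qFac_succ j', qFac_succ n, show n + 1 + k = n + k + 1 from by omega]
      have h1 := qFac_ne_zero n
      have h2 := qFac_ne_zero j'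
      have h3 := qFac_ne_zero (j' - k)
      have h4 := qFac_ne_zero k
      have h5 := qFac_ne_zero (k + 1)
      have h6 := qFac_ne_zero (n + k + 1)
      have h7 : qInt (n + 1) ≠ 0 := qInt_ne_zero (Nat.succ_pos n)
      field_simp

lemma qKey2 (n m j' : ℕ) :
    qBinom (n + (j' + 1) + m) (j' + 1) / qBinom (n + (j' + 1)) (j' + 1)
      + RatFunc.X ^ (n + m + 1) * (qInt (j' + 1) / qInt (n + 1)) *
          (qBinom (n + (j' + 1) + m) j' / qBinom (n + (j' + 1)) j')
    = qBinom (n + (j' + 1) + (m + 1)) (j' + 1) / qBinom (n + (j' + 1)) (j' + 1) := by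
  rw [qBinom_of_le (by omega : j' + 1 ≤ n + (j' + 1) + m),
    qBinom_of_le (by omega : j' + 1 ≤ n + (j' + 1)),
    qBinom_of_le (by omega : j' ≤ n + (j' + 1) + m),
    qBinom_of_le (by omega : j' ≤ n + (j' + 1)),
    qBinom_of_le (by omega : j' + 1 ≤ n + (j' + 1) + (m + 1))]
  rw [show n + (j' + 1) + m - (j' + 1) = n + m from by omega,
    show n + (j' + 1) - (j' + 1) = n from by omega,
    show n + (j' + 1) + m - j' = n + m + 1 from by omega,
    show n + (j' + 1) - j' = n + 1 from by omega,
    show n + (j' + 1) + (m + 1) - (j' + 1) = n + m + 1 from by omega]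
  rw [show n + (j' + 1) + (m + 1) = (n + (j' + 1) + m) + 1 from by omega]
  rw [qFac_succ (n + (j' + 1) + m), qFac_succ (n + m), qFac_succ j', qFac_succ n]
  have hsplit : qInt (n + (j' + 1) + m + 1) =
      qInt (n + m + 1) + RatFunc.X ^ (n + m + 1) * qInt (j' + 1) := by
    rw [show n + (j' + 1) + m + 1 = (n + m + 1) + (j' + 1) from by omega, qInt_add]
  rw [hsplit]
  have h1 := qFac_ne_zero n
  have h2 := qFac_ne_zero j'
  have h3 := qFac_ne_zero (n + m)
  have h4 := qFac_ne_zero (n + (j' + 1) + m)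
  have h5 := qFac_ne_zero (n + (j' + 1))
  have h6 : qInt (n + 1) ≠ 0 := qInt_ne_zero (Nat.succ_pos n)
  have h7 : qInt (j' + 1) ≠ 0 := qInt_ne_zero (Nat.succ_pos j')
  have h8 : qInt (n + m + 1) ≠ 0 := qInt_ne_zero (Nat.succ_pos _)
  have h9 : qInt (1 + n) ≠ 0 := qInt_ne_zero (by omega)
  have h10 : qInt (1 + n + m) ≠ 0 := qInt_ne_zero (by omega)
  have h11 : qInt (1 + j') ≠ 0 := qInt_ne_zero (by omega)
  field_simp [qFac_ne_zero]

lemma qSaal (m n j : ℕ) :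
    ∑ k ∈ Finset.range (m + 1),
        RatFunc.X ^ (k * (n + k)) * qBinom j k * qBinom m k / qBinom (n + k) k
      = qBinom (n + j + m) j / qBinom (n + j) j := by
  induction m generalizing n j with
  | zero =>
    rw [Finset.sum_range_one]
    simp [qBinom_zero]
    rw [div_self (qBinom_ne_zero (Nat.le_add_left j n))]
  | succ m ih =>
    rcases j with _ | j'
    · rw [Finset.sum_eq_single 0 (fun k _ hk => by
        rw [qBinom_of_lt (show (0:ℕ) < k by omega)]; ring)
        (fun h => absurd (Finset.mem_range.mpr (by omega)) h)]
      simp [qBinom_zero]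
    · rw [Finset.sum_range_succ']
      have hf0 : RatFunc.X ^ (0 * (n + 0)) * qBinom (j' + 1) 0 * qBinom (m + 1) 0 /
          qBinom (n + 0) 0 = 1 := by simp [qBinom_zero]
      rw [hf0]
      have hsplit : ∀ k ∈ Finset.range (m + 1),
          RatFunc.X ^ ((k + 1) * (n + (k + 1))) * qBinom (j' + 1) (k + 1) *
              qBinom (m + 1) (k + 1) / qBinom (n + (k + 1)) (k + 1)
            = RatFunc.X ^ ((k + 1) * (n + (k + 1))) * qBinom (j' + 1) (k + 1) *
                qBinom m (k + 1) / qBinom (n + (k + 1)) (k + 1)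
              + RatFunc.X ^ (n + m + 1) * (qInt (j' + 1) / qInt (n + 1)) *
                  (RatFunc.X ^ (k * (n + 1 + k)) * qBinom j' k * qBinom m k /
                    qBinom (n + 1 + k) k) := by
        intro k hk
        have hkm : k ≤ m := by simp [Finset.mem_range] at hk; omega
        have hr := qRatio n (j' + 1) k
        rw [show (j' + 1 - 1 : ℕ) = j' from rfl] at hr
        have hnk : n + (k + 1) = n + k + 1 := by omega
        have hcross : RatFunc.X ^ ((k + 1) * (n + (k + 1))) * qBinom (j' + 1) (k + 1) *
            (RatFunc.X ^ (m - k) * qBinom m k) / qBinom (n + (k + 1)) (k + 1)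
            = RatFunc.X ^ (n + m + 1) * (qInt (j' + 1) / qInt (n + 1)) *
                (RatFunc.X ^ (k * (n + 1 + k)) * qBinom j' k * qBinom m k /
                  qBinom (n + 1 + k) k) := by
          rw [hnk]
          have lhsq : RatFunc.X ^ ((k + 1) * (n + k + 1)) * qBinom (j' + 1) (k + 1) *
              (RatFunc.X ^ (m - k) * qBinom m k) / qBinom (n + k + 1) (k + 1)
              = RatFunc.X ^ ((k + 1) * (n + k + 1) + (m - k)) * qBinom m k *
                (qBinom (j' + 1) (k + 1) / qBinom (n + k + 1) (k + 1)) := by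
            rw [pow_add]; ring
          rw [lhsq, hr]
          have he : (k + 1) * (n + k + 1) + (m - k) = (n + m + 1) + k * (n + 1 + k) := by
            zify [hkm]
            ring
          rw [he, pow_add]
          ring
        rw [qBinom_pascal m k, mul_add, add_div, hcross]
      rw [Finset.sum_congr rfl hsplit, Finset.sum_add_distrib, ← Finset.mul_sum, ih (n + 1) j']
      -- reassemble the first sum
      have hA : (∑ k ∈ Finset.range (m + 1),
          RatFunc.X ^ ((k + 1) * (n + (k + 1))) * qBinom (j' + 1) (k + 1) *
            qBinom m (k + 1) / qBinom (n + (k + 1)) (k + 1))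
          = ∑ k ∈ Finset.range m,
          RatFunc.X ^ ((k + 1) * (n + (k + 1))) * qBinom (j' + 1) (k + 1) *
            qBinom m (k + 1) / qBinom (n + (k + 1)) (k + 1) := by
        rw [Finset.sum_range_succ, qBinom_of_lt (show m < m + 1 by omega)]
        simp
      rw [hA]
      have hIH := ih n (j' + 1)
      rw [Finset.sum_range_succ'] at hIH
      have hg0 : RatFunc.X ^ (0 * (n + 0)) * qBinom (j' + 1) 0 * qBinom m 0 /
          qBinom (n + 0) 0 = 1 := by simp [qBinom_zero]
      rw [hg0] at hIH
      -- hIH : Σ_{k<m} A k + 1 = qBinom (n+(j'+1)+m) (j'+1) / qBinom (n+(j'+1)) (j'+1)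
      have hfin := qKey2 n m j'
      rw [show n + (j' + 1) + (m + 1) = n + (j' + 1) + m + 1 from by omega] at hfin
      rw [show (n + 1) + j' + m = n + (j' + 1) + m from by omega,
        show (n + 1) + j' = n + (j' + 1) from by omega]
      rw [show n + (j' + 1) + (m + 1) = n + (j' + 1) + m + 1 from by omega]
      calc _ = (∑ k ∈ Finset.range m,
            RatFunc.X ^ ((k + 1) * (n + (k + 1))) * qBinom (j' + 1) (k + 1) *
              qBinom m (k + 1) / qBinom (n + (k + 1)) (k + 1)) + 1
            + RatFunc.X ^ (n + m + 1) * (qInt (j' + 1) / qInt (n + 1)) *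
              (qBinom (n + (j' + 1) + m) j' / qBinom (n + (j' + 1)) j') := by ring
        _ = _ := by rw [hIH]; exact hfin

lemma qTerm (n p j k : ℕ) (hkj : k ≤ j) (hjk : j + k ≤ p) :
    qA n k * (RatFunc.X ^ (k * (n + k) + j * (n + j)) * qBinom p (2 * k) *
        qBinom (p - 2 * k) (j - k))
      = qBinom (2 * n) n * (RatFunc.X ^ (j * (n + j)) * qBinom p j) *
        (RatFunc.X ^ (k * (n + k)) * qBinom j k * qBinom (p - j) k / qBinom (n + k) k) := by
  rw [qA, qBinom_of_le (show 2 * k ≤ p by omega), qBinom_of_le (show j - k ≤ p - 2 * k by omega),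
    qBinom_of_le (show j ≤ p by omega), qBinom_of_le hkj,
    qBinom_of_le (show k ≤ p - j by omega), qBinom_of_le (show k ≤ n + k by omega),
    qBinom_of_le (show n ≤ 2 * n by omega)]
  rw [show p - 2 * k - (j - k) = p - j - k from by omega,
    show n + k - k = n from by omega, show 2 * n - n = n from by omega]
  field_simp [qFac_ne_zero]
  ring

lemma qLHS (n p : ℕ) :
    qA n (n + p) =
      ∑ j ∈ Finset.range (p + 1),
        qBinom (2 * n) n * (RatFunc.X ^ (j * (n + j)) * qBinom p j) *
          (qBinom (n + p) j / qBinom (n + j) j) := by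
  have hC : qA n (n + p) =
      (qFac (2 * n) * qFac (n + p) / (qFac n * qFac (2 * n + p))) *
        qBinom (2 * n + 2 * p) (n + p) := by
    rw [qA, qBinom_of_le (show n + p ≤ 2 * n + 2 * p by omega),
      show 2 * n + 2 * p - (n + p) = n + p from by omega,
      show 2 * (n + p) = 2 * n + 2 * p from by ring,
      show n + (n + p) = 2 * n + p from by ring]
    field_simp [qFac_ne_zero]
  rw [hC, qVand_inst, Finset.mul_sum]
  apply Finset.sum_congr rfl
  intro j hj
  have hjp : j ≤ p := by simp [Finset.mem_range] at hj; omega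
  rw [qBinom_of_le (show n + j ≤ 2 * n + p by omega),
    show 2 * n + p - (n + j) = n + p - j from by omega,
    qBinom_of_le hjp, qBinom_of_le (show j ≤ n + p by omega),
    qBinom_of_le (show j ≤ n + j by omega), show n + j - j = n from by omega,
    qBinom_of_le (show n ≤ 2 * n by omega), show 2 * n - n = n from by omega]
  field_simp [qFac_ne_zero]

theorem qA_recurrence (n p : ℕ) :
    qA n (n + p) =
      ∑ k ∈ Finset.range (p / 2 + 1), qA n k *
        ∑ j ∈ Finset.Icc k (p - k),
          RatFunc.X ^ (k * (n + k) + j * (n + j)) *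
            qBinom p (2 * k) * qBinom (p - 2 * k) (j - k) := by
  have hrow : ∀ k ∈ Finset.range (p / 2 + 1),
      (qA n k * ∑ j ∈ Finset.Icc k (p - k),
          RatFunc.X ^ (k * (n + k) + j * (n + j)) *
            qBinom p (2 * k) * qBinom (p - 2 * k) (j - k))
        = ∑ j ∈ Finset.range (p + 1),
            (if k ≤ j ∧ j + k ≤ p then
              qA n k * (RatFunc.X ^ (k * (n + k) + j * (n + j)) *
                qBinom p (2 * k) * qBinom (p - 2 * k) (j - k)) else 0) := by
    intro k hk
    rw [← Finset.sum_filter]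
    have hfe : (Finset.range (p + 1)).filter (fun j => k ≤ j ∧ j + k ≤ p)
        = Finset.Icc k (p - k) := by
      ext x
      simp only [Finset.mem_filter, Finset.mem_range, Finset.mem_Icc]
      omega
    rw [hfe, Finset.mul_sum]
  have hBig : (∑ k ∈ Finset.range (p / 2 + 1), qA n k *
        ∑ j ∈ Finset.Icc k (p - k),
          RatFunc.X ^ (k * (n + k) + j * (n + j)) *
            qBinom p (2 * k) * qBinom (p - 2 * k) (j - k))
      = ∑ k ∈ Finset.range (p + 1), ∑ j ∈ Finset.range (p + 1),
          (if k ≤ j ∧ j + k ≤ p then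
            qA n k * (RatFunc.X ^ (k * (n + k) + j * (n + j)) *
              qBinom p (2 * k) * qBinom (p - 2 * k) (j - k)) else 0) := by
    rw [Finset.sum_congr rfl hrow]
    apply Finset.sum_subset
    · intro x hx
      simp only [Finset.mem_range] at hx ⊢
      omega
    · intro k hk hnk
      apply Finset.sum_eq_zero
      intro j hj
      rw [if_neg]
      simp only [Finset.mem_range] at hk hnk
      omega
  have hcol : ∀ j ∈ Finset.range (p + 1),
      (∑ k ∈ Finset.range (p + 1),
        (if k ≤ j ∧ j + k ≤ p then
          qA n k * (RatFunc.X ^ (k * (n + k) + j * (n + j)) *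
            qBinom p (2 * k) * qBinom (p - 2 * k) (j - k)) else 0))
      = qBinom (2 * n) n * (RatFunc.X ^ (j * (n + j)) * qBinom p j) *
          (qBinom (n + p) j / qBinom (n + j) j) := by
    intro j hj
    have hjp : j ≤ p := by simp only [Finset.mem_range] at hj; omega
    rw [← Finset.sum_filter]
    have hfe : (Finset.range (p + 1)).filter (fun k => k ≤ j ∧ j + k ≤ p)
        = Finset.range (min j (p - j) + 1) := by
      ext x
      simp only [Finset.mem_filter, Finset.mem_range]
      omega
    rw [hfe]
    have ht : ∀ k ∈ Finset.range (min j (p - j) + 1),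
        qA n k * (RatFunc.X ^ (k * (n + k) + j * (n + j)) *
            qBinom p (2 * k) * qBinom (p - 2 * k) (j - k))
          = qBinom (2 * n) n * (RatFunc.X ^ (j * (n + j)) * qBinom p j) *
            (RatFunc.X ^ (k * (n + k)) * qBinom j k * qBinom (p - j) k / qBinom (n + k) k) := by
      intro k hk
      simp only [Finset.mem_range] at hk
      exact qTerm n p j k (by omega) (by omega)
    rw [Finset.sum_congr rfl ht, ← Finset.mul_sum]
    congr 1
    have hext : (∑ k ∈ Finset.range (min j (p - j) + 1),
        RatFunc.X ^ (k * (n + k)) * qBinom j k * qBinom (p - j) k / qBinom (n + k) k)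
        = ∑ k ∈ Finset.range ((p - j) + 1),
            RatFunc.X ^ (k * (n + k)) * qBinom j k * qBinom (p - j) k / qBinom (n + k) k := by
      apply Finset.sum_subset
      · intro x hx
        simp only [Finset.mem_range] at hx ⊢
        omega
      · intro k hk hnk
        simp only [Finset.mem_range] at hk hnk
        rw [qBinom_of_lt (show j < k by omega)]
        ring
    rw [hext, qSaal (p - j) n j, show n + j + (p - j) = n + p from by omega]
  calc qA n (n + p)
      = ∑ j ∈ Finset.range (p + 1),
          qBinom (2 * n) n * (RatFunc.X ^ (j * (n + j)) * qBinom p j) *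
            (qBinom (n + p) j / qBinom (n + j) j) := qLHS n p
    _ = ∑ j ∈ Finset.range (p + 1), ∑ k ∈ Finset.range (p + 1),
          (if k ≤ j ∧ j + k ≤ p then
            qA n k * (RatFunc.X ^ (k * (n + k) + j * (n + j)) *
              qBinom p (2 * k) * qBinom (p - 2 * k) (j - k)) else 0) :=
        (Finset.sum_congr rfl hcol).symm
    _ = ∑ k ∈ Finset.range (p + 1), ∑ j ∈ Finset.range (p + 1),
          (if k ≤ j ∧ j + k ≤ p then
            qA n k * (RatFunc.X ^ (k * (n + k) + j * (n + j)) *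
              qBinom p (2 * k) * qBinom (p - 2 * k) (j - k)) else 0) := Finset.sum_comm
    _ = _ := hBig.symm
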